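/- Let (f_n) be a sequence of monotone non-expansive maps on a 0-box X ⊆ ℝ_{≥0}^d converging pointwise to a Picard operator f : X → X. Then lim_{n→∞} μ(sup_{k≥n} f_k) = μf, where μ denotes the least fixpoint. -/

import Mathlib

open Filter

/-- The 0-box `{x ∈ ℝ≥0^d | x ≤ x*}` for `x* ∈ [0,∞]^d`. -/
def zeroBox (d : ℕ) (xstar : Fin d → ENNReal) : Set (Fin d → ℝ) :=
  {x | ∀ i, 0 ≤ x i ∧ ENNReal.ofReal (x i) ≤ xstar i}

/-- The ω-continuous extension of `f : X → X` to `[0,∞]^d`: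
`f̄(x) = sup { f(y) | y ∈ X, y ≤ x }`. -/
noncomputable def extendF (d : ℕ) (xstar : Fin d → ENNReal)
    (f : (Fin d → ℝ) → Fin d → ℝ) : (Fin d → ENNReal) → Fin d → ENNReal :=
  fun x i =>
    ⨆ y : {y : Fin d → ℝ // y ∈ zeroBox d xstar ∧ ∀ j, ENNReal.ofReal (y j) ≤ x j},
      ENNReal.ofReal (f y.1 i)

/-- The least fixpoint of a (monotone) map on `[0,∞]^d` (Knaster–Tarski). -/
noncomputable def lfpF (d : ℕ) (F : (Fin d → ENNReal) → Fin d → ENNReal) :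
    Fin d → ENNReal :=
  sInf {x : Fin d → ENNReal | F x ≤ x}

lemma zero_mem_zeroBox (d : ℕ) (xstar : Fin d → ENNReal) :
    (fun _ => (0:ℝ)) ∈ zeroBox d xstar := by
  intro i; simp

/-- Any prefixpoint of the extension of `f` dominates `ofReal ∘ mu`. -/
lemma ofReal_mu_le_of_prefixpoint (d : ℕ) (xstar : Fin d → ENNReal)
    (f : (Fin d → ℝ) → Fin d → ℝ)
    (hmaps : ∀ x ∈ zeroBox d xstar, f x ∈ zeroBox d xstar)
    (mu : Fin d → ℝ)
    (hpicard0 : Tendsto (fun m => f^[m] (fun _ => (0:ℝ))) atTop (nhds mu))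
    (x : Fin d → ENNReal) (hx : extendF d xstar f x ≤ x) :
    ∀ i, ENNReal.ofReal (mu i) ≤ x i := by
  have key : ∀ m, f^[m] (fun _ => (0:ℝ)) ∈ zeroBox d xstar ∧
      ∀ j, ENNReal.ofReal (f^[m] (fun _ => (0:ℝ)) j) ≤ x j := by
    intro m
    induction m with
    | zero => exact ⟨zero_mem_zeroBox d xstar, fun j => by simp⟩
    | succ m ih =>
      obtain ⟨hzX, hzle⟩ := ih
      rw [Function.iterate_succ_apply']
      refine ⟨hmaps _ hzX, fun j => ?_⟩
      refine le_trans ?_ (hx j)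
      exact le_iSup (fun y : {y : Fin d → ℝ // y ∈ zeroBox d xstar ∧
        ∀ j', ENNReal.ofReal (y j') ≤ x j'} => ENNReal.ofReal (f y.1 j))
        ⟨_, hzX, hzle⟩
  intro i
  have h1 : Tendsto (fun m => ENNReal.ofReal (f^[m] (fun _ => (0:ℝ)) i)) atTop
      (nhds (ENNReal.ofReal (mu i))) :=
    (ENNReal.continuous_ofReal.tendsto _).comp (tendsto_pi_nhds.mp hpicard0 i)
  exact le_of_tendsto h1 (Eventually.of_forall fun m => (key m).2 i)

/-- The extension of the limit is below the tail-sup operator. -/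
lemma extendF_le_tailSup (d : ℕ) (xstar : Fin d → ENNReal)
    (fn : ℕ → (Fin d → ℝ) → Fin d → ℝ)
    (f : (Fin d → ℝ) → Fin d → ℝ)
    (hconv : ∀ x ∈ zeroBox d xstar, Tendsto (fun n => fn n x) atTop (nhds (f x)))
    (n : ℕ) (x : Fin d → ENNReal) :
    extendF d xstar f x ≤ fun i => ⨆ k : {k : ℕ // n ≤ k}, extendF d xstar (fn k.1) x i := by
  intro i
  refine iSup_le fun y => ?_
  have h1 : Tendsto (fun m => ENNReal.ofReal (fn (m + n) y.1 i)) atTop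
      (nhds (ENNReal.ofReal (f y.1 i))) := by
    have := (ENNReal.continuous_ofReal.tendsto _).comp (tendsto_pi_nhds.mp (hconv y.1 y.2.1) i)
    exact this.comp (tendsto_add_atTop_nat n)
  refine le_of_tendsto h1 (Eventually.of_forall fun m => ?_)
  refine le_iSup_of_le ⟨m + n, Nat.le_add_left n m⟩ ?_
  exact le_iSup (fun y' : {y : Fin d → ℝ // y ∈ zeroBox d xstar ∧
    ∀ j, ENNReal.ofReal (y j) ≤ x j} => ENNReal.ofReal (fn (m + n) y'.1 i)) y

/-- The lfp of the extension of `f` is `ofReal ∘ mu`. -/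
lemma lfp_extendF_eq (d : ℕ) (xstar : Fin d → ENNReal)
    (f : (Fin d → ℝ) → Fin d → ℝ)
    (hmaps : ∀ x ∈ zeroBox d xstar, f x ∈ zeroBox d xstar)
    (hmono : ∀ x ∈ zeroBox d xstar, ∀ y ∈ zeroBox d xstar, x ≤ y → f x ≤ f y)
    (mu : Fin d → ℝ) (hmuX : mu ∈ zeroBox d xstar) (hfix : f mu = mu)
    (hpicard0 : Tendsto (fun m => f^[m] (fun _ => (0:ℝ))) atTop (nhds mu)) :
    lfpF d (extendF d xstar f) = fun i => ENNReal.ofReal (mu i) := by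
  apply le_antisymm
  · apply sInf_le
    intro i
    refine iSup_le fun y => ?_
    have hy_le : y.1 ≤ mu := fun j =>
      (ENNReal.ofReal_le_ofReal_iff (hmuX j).1).mp (y.2.2 j)
    have := hmono y.1 y.2.1 mu hmuX hy_le i
    rw [hfix] at this
    exact ENNReal.ofReal_le_ofReal this
  · exact le_sInf fun x hx => ofReal_mu_le_of_prefixpoint d xstar f hmaps mu hpicard0 x hx

section helpers
variable {d : ℕ}

lemma coord_le_of_norm (x y : Fin d → ℝ) (c : ℝ) (h : ‖x - y‖ ≤ c) (i : Fin d) :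
    x i ≤ y i + c := by
  have h1 := norm_le_pi_norm (x - y) i
  rw [Pi.sub_apply, Real.norm_eq_abs] at h1
  have := abs_le.mp (h1.trans h)
  linarith [this.2]

lemma norm_le_of_coord {x y : Fin d → ℝ} {c : ℝ} (hc : 0 ≤ c)
    (h1 : ∀ i, y i ≤ x i) (h2 : ∀ i, x i ≤ y i + c) : ‖x - y‖ ≤ c := by
  rw [pi_norm_le_iff_of_nonneg hc]
  intro i
  rw [Pi.sub_apply, Real.norm_eq_abs, abs_le]
  constructor <;> [linarith [h1 i]; linarith [h2 i]]

end helpers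

noncomputable def gS (d : ℕ) (fn : ℕ → (Fin d → ℝ) → Fin d → ℝ) (n : ℕ)
    (z : Fin d → ℝ) : Fin d → ℝ :=
  fun i => ⨆ k : {k : ℕ // n ≤ k}, fn k.1 z i

section gSfacts

variable {d : ℕ} (xstar : Fin d → ENNReal)
    (fn : ℕ → (Fin d → ℝ) → Fin d → ℝ)
    (f : (Fin d → ℝ) → Fin d → ℝ)

lemma gS_bddAbove
    (hconv : ∀ x ∈ zeroBox d xstar, Tendsto (fun n => fn n x) atTop (nhds (f x)))
    (n : ℕ) {z : Fin d → ℝ} (hz : z ∈ zeroBox d xstar) (i : Fin d) :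
    BddAbove (Set.range fun k : {k : ℕ // n ≤ k} => fn k.1 z i) := by
  have h1 : Tendsto (fun k => fn k z i) atTop (nhds (f z i)) :=
    tendsto_pi_nhds.mp (hconv z hz) i
  refine h1.bddAbove_range.mono ?_
  rintro _ ⟨k, rfl⟩; exact ⟨k.1, rfl⟩

lemma le_gS
    (hconv : ∀ x ∈ zeroBox d xstar, Tendsto (fun n => fn n x) atTop (nhds (f x)))
    (n k : ℕ) (hk : n ≤ k) {z : Fin d → ℝ} (hz : z ∈ zeroBox d xstar) (i : Fin d) :
    fn k z i ≤ gS d fn n z i :=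
  le_ciSup (gS_bddAbove xstar fn f hconv n hz i) ⟨k, hk⟩

lemma f_le_gS
    (hconv : ∀ x ∈ zeroBox d xstar, Tendsto (fun n => fn n x) atTop (nhds (f x)))
    (n : ℕ) {z : Fin d → ℝ} (hz : z ∈ zeroBox d xstar) (i : Fin d) :
    f z i ≤ gS d fn n z i := by
  have h1 : Tendsto (fun m => fn (m + n) z i) atTop (nhds (f z i)) :=
    (tendsto_pi_nhds.mp (hconv z hz) i).comp (tendsto_add_atTop_nat n)
  exact le_of_tendsto h1 (Eventually.of_forall fun m =>
    le_gS xstar fn f hconv n (m + n) (Nat.le_add_left n m) hz i)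

lemma gS_mem
    (hfnmaps : ∀ n, ∀ x ∈ zeroBox d xstar, fn n x ∈ zeroBox d xstar)
    (hconv : ∀ x ∈ zeroBox d xstar, Tendsto (fun n => fn n x) atTop (nhds (f x)))
    (n : ℕ) {z : Fin d → ℝ} (hz : z ∈ zeroBox d xstar) :
    gS d fn n z ∈ zeroBox d xstar := by
  haveI : Nonempty {k : ℕ // n ≤ k} := ⟨⟨n, le_rfl⟩⟩
  intro i
  constructor
  · exact le_trans (hfnmaps n z hz i).1 (le_gS xstar fn f hconv n n le_rfl hz i)
  · rcases eq_or_ne (xstar i) ⊤ with h | h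
    · simp [h]
    · rw [ENNReal.ofReal_le_iff_le_toReal h]
      exact ciSup_le fun k =>
        (ENNReal.ofReal_le_iff_le_toReal h).mp (hfnmaps k.1 z hz i).2

lemma gS_mono
    (hfnmono : ∀ n, ∀ x ∈ zeroBox d xstar, ∀ y ∈ zeroBox d xstar, x ≤ y → fn n x ≤ fn n y)
    (hconv : ∀ x ∈ zeroBox d xstar, Tendsto (fun n => fn n x) atTop (nhds (f x)))
    (n : ℕ) {z w : Fin d → ℝ} (hz : z ∈ zeroBox d xstar) (hw : w ∈ zeroBox d xstar)
    (hzw : z ≤ w) : gS d fn n z ≤ gS d fn n w := by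
  haveI : Nonempty {k : ℕ // n ≤ k} := ⟨⟨n, le_rfl⟩⟩
  intro i
  exact ciSup_le fun k => (hfnmono k.1 z hz w hw hzw i).trans
    (le_gS xstar fn f hconv n k.1 k.2 hw i)

lemma gS_le_add
    (hfnne : ∀ n, ∀ x ∈ zeroBox d xstar, ∀ y ∈ zeroBox d xstar, ‖fn n x - fn n y‖ ≤ ‖x - y‖)
    (hconv : ∀ x ∈ zeroBox d xstar, Tendsto (fun n => fn n x) atTop (nhds (f x)))
    (n : ℕ) {z w : Fin d → ℝ} (hz : z ∈ zeroBox d xstar) (hw : w ∈ zeroBox d xstar)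
    (c : ℝ) (hc : ‖z - w‖ ≤ c) (i : Fin d) :
    gS d fn n z i ≤ gS d fn n w i + c := by
  haveI : Nonempty {k : ℕ // n ≤ k} := ⟨⟨n, le_rfl⟩⟩
  refine ciSup_le fun k => ?_
  have h1 : fn k.1 z i ≤ fn k.1 w i + c :=
    coord_le_of_norm _ _ c ((hfnne k.1 z hz w hw).trans hc) i
  exact h1.trans (add_le_add_left (le_gS xstar fn f hconv n k.1 k.2 hw i) c)

lemma gS_eventually_le
    (hconv : ∀ x ∈ zeroBox d xstar, Tendsto (fun n => fn n x) atTop (nhds (f x)))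
    {z : Fin d → ℝ} (hz : z ∈ zeroBox d xstar) {η : ℝ} (hη : 0 < η) :
    ∀ᶠ n in atTop, ∀ i, gS d fn n z i ≤ f z i + η := by
  have h1 := Metric.tendsto_atTop.mp (hconv z hz) η hη
  obtain ⟨N, hN⟩ := h1
  refine eventually_atTop.2 ⟨N, fun n hn i => ?_⟩
  haveI : Nonempty {k : ℕ // n ≤ k} := ⟨⟨n, le_rfl⟩⟩
  refine ciSup_le fun k => ?_
  have h2 := hN k.1 (hn.trans k.2)
  rw [dist_eq_norm] at h2
  exact coord_le_of_norm _ _ η h2.le i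

end gSfacts

lemma lfp_tailSup_upper (d : ℕ) (xstar : Fin d → ENNReal)
    (fn : ℕ → (Fin d → ℝ) → Fin d → ℝ)
    (hfnmaps : ∀ n, ∀ x ∈ zeroBox d xstar, fn n x ∈ zeroBox d xstar)
    (hfnmono : ∀ n, ∀ x ∈ zeroBox d xstar, ∀ y ∈ zeroBox d xstar, x ≤ y → fn n x ≤ fn n y)
    (hfnne : ∀ n, ∀ x ∈ zeroBox d xstar, ∀ y ∈ zeroBox d xstar, ‖fn n x - fn n y‖ ≤ ‖x - y‖)
    (f : (Fin d → ℝ) → Fin d → ℝ)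
    (hmaps : ∀ x ∈ zeroBox d xstar, f x ∈ zeroBox d xstar)
    (hmono : ∀ x ∈ zeroBox d xstar, ∀ y ∈ zeroBox d xstar, x ≤ y → f x ≤ f y)
    (hne : ∀ x ∈ zeroBox d xstar, ∀ y ∈ zeroBox d xstar, ‖f x - f y‖ ≤ ‖x - y‖)
    (hconv : ∀ x ∈ zeroBox d xstar, Tendsto (fun n => fn n x) atTop (nhds (f x)))
    (mu : Fin d → ℝ) (hmuX : mu ∈ zeroBox d xstar) (hfix : f mu = mu)
    (hpicard : ∀ x ∈ zeroBox d xstar, Tendsto (fun n => f^[n] x) atTop (nhds mu))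
    (δ : ℝ) (hδ : 0 < δ) :
    ∀ᶠ n in atTop, ∀ i,
      lfpF d (fun x i => ⨆ k : {k : ℕ // n ≤ k}, extendF d xstar (fn k.1) x i) i
        ≤ ENNReal.ofReal (mu i + δ) := by
  set ε := δ / 2 with hε
  have hεpos : 0 < ε := by positivity
  -- the clamped upper point v0
  set v0 : Fin d → ℝ := fun i =>
    if xstar i = ⊤ then mu i + ε else min (mu i + ε) (xstar i).toReal with hv0
  have hclamp : ∀ y ∈ zeroBox d xstar, (∀ i, y i ≤ mu i + ε) → y ≤ v0 := by
    intro y hy hyb i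
    rcases eq_or_ne (xstar i) ⊤ with h | h
    · simp only [hv0, h, if_pos rfl]; exact hyb i
    · simp only [hv0, if_neg h]
      exact le_min (hyb i) ((ENNReal.ofReal_le_iff_le_toReal h).mp (hy i).2)
  have hv0X : v0 ∈ zeroBox d xstar := by
    intro i
    simp only [hv0]
    split_ifs with h
    · exact ⟨by linarith [(hmuX i).1], by simp [h]⟩
    · exact ⟨le_min (by linarith [(hmuX i).1]) ENNReal.toReal_nonneg,
        le_trans (ENNReal.ofReal_le_ofReal (min_le_right _ _)) ENNReal.ofReal_toReal_le⟩
  have hmuv0 : mu ≤ v0 := hclamp mu hmuX (fun i => by linarith)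
  have hv0le : ∀ i, v0 i ≤ mu i + ε := by
    intro i
    rcases eq_or_ne (xstar i) ⊤ with h | h
    · simp [hv0, h]
    · simp only [hv0, if_neg h]; exact min_le_left _ _
  have hnormv0 : ‖v0 - mu‖ ≤ ε :=
    norm_le_of_coord hεpos.le (fun i => hmuv0 i) (fun i => by linarith [hv0le i])
  have hfv0 : f v0 ≤ v0 := by
    refine hclamp _ (hmaps v0 hv0X) fun i => ?_
    have h1 : ‖f v0 - f mu‖ ≤ ε := (hne v0 hv0X mu hmuX).trans hnormv0
    have h2 := coord_le_of_norm _ _ ε h1 i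
    rw [hfix] at h2; exact h2
  -- iterates of f from v0
  have hfit : ∀ j, f^[j] v0 ∈ zeroBox d xstar ∧ f^[j] v0 ≤ v0 := by
    intro j
    induction j with
    | zero => exact ⟨hv0X, le_rfl⟩
    | succ j ih =>
      rw [Function.iterate_succ_apply']
      exact ⟨hmaps _ ih.1, le_trans (hmono _ ih.1 v0 hv0X ih.2) hfv0⟩
  -- choose M
  obtain ⟨N0, hN0⟩ := Metric.tendsto_atTop.mp (hpicard v0 hv0X) (ε/2) (by positivity)
  set M := max 1 N0 with hM
  have hM1 : 1 ≤ M := le_max_left _ _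
  have hMR : (0:ℝ) < M := by exact_mod_cast Nat.lt_of_lt_of_le Nat.zero_lt_one hM1
  have hMb : ∀ i, f^[M] v0 i ≤ mu i + ε/2 := by
    intro i
    have h1 := hN0 M (le_max_right _ _)
    rw [dist_eq_norm] at h1
    exact coord_le_of_norm _ _ (ε/2) h1.le i
  set η := ε / (2 * M) with hηdef
  have hηpos : 0 < η := by positivity
  -- eventual closeness on the finite orbit of f
  have hEv : ∀ᶠ n in atTop, ∀ j : Fin M, ∀ i,
      gS d fn n (f^[j.1] v0) i ≤ f (f^[j.1] v0) i + η :=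
    eventually_all.2 fun j => gS_eventually_le xstar fn f hconv (hfit j.1).1 hηpos
  filter_upwards [hEv] with n hn
  -- iterates of g := gS n
  set g := gS d fn n with hg
  have hIter : ∀ j, j ≤ M →
      g^[j] v0 ∈ zeroBox d xstar ∧ (∀ i, f^[j] v0 i ≤ g^[j] v0 i) ∧
        (∀ i, g^[j] v0 i ≤ f^[j] v0 i + j * η) := by
    intro j
    induction j with
    | zero => exact fun _ => ⟨hv0X, fun i => le_rfl, fun i => by simp⟩
    | succ j ih =>
      intro hj
      obtain ⟨hX, hlow, hup⟩ := ih (by omega)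
      have hjM : j < M := by omega
      have hnj := hn ⟨j, hjM⟩
      have hgmem : g^[j+1] v0 ∈ zeroBox d xstar := by
        rw [Function.iterate_succ_apply']
        exact gS_mem xstar fn f hfnmaps hconv n hX
      have hnorm : ‖g^[j] v0 - f^[j] v0‖ ≤ j * η :=
        norm_le_of_coord (by positivity) hlow hup
      refine ⟨hgmem, fun i => ?_, fun i => ?_⟩
      · rw [Function.iterate_succ_apply', Function.iterate_succ_apply']
        exact le_trans (hmono _ (hfit j).1 _ hX hlow i)
          (f_le_gS xstar fn f hconv n hX i)
      · rw [Function.iterate_succ_apply', Function.iterate_succ_apply']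
        have h1 : g (g^[j] v0) i ≤ g (f^[j] v0) i + j * η :=
          gS_le_add xstar fn f hfnne hconv n hX (hfit j).1 _ hnorm i
        have h2 : g (f^[j] v0) i ≤ f (f^[j] v0) i + η := hnj i
        push_cast
        linarith
  -- after M steps we are back under v0
  have hxM : g^[M] v0 ≤ v0 := by
    refine hclamp _ (hIter M le_rfl).1 fun i => ?_
    have h1 := (hIter M le_rfl).2.2 i
    have h2 : (M:ℝ) * η = ε / 2 := by
      rw [hηdef]; field_simp
    have := hMb i
    rw [h2] at h1
    linarith
  -- monotonicity of iterates of g on the box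
  have hgiter : ∀ r, ∀ z w : Fin d → ℝ, z ∈ zeroBox d xstar → w ∈ zeroBox d xstar →
      z ≤ w → g^[r] z ∈ zeroBox d xstar ∧ g^[r] w ∈ zeroBox d xstar ∧
        g^[r] z ≤ g^[r] w := by
    intro r
    induction r with
    | zero => exact fun z w hz hw hzw => ⟨hz, hw, hzw⟩
    | succ r ih =>
      intro z w hz hw hzw
      obtain ⟨h1, h2, h3⟩ := ih z w hz hw hzw
      rw [Function.iterate_succ_apply', Function.iterate_succ_apply']
      exact ⟨gS_mem xstar fn f hfnmaps hconv n h1,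
        gS_mem xstar fn f hfnmaps hconv n h2,
        gS_mono xstar fn f hfnmono hconv n h1 h2 h3⟩
  -- the orbit of mu under g stays in the box, below mu + δ
  have hblock : ∀ j, g^[M * j] mu ∈ zeroBox d xstar ∧ g^[M * j] mu ≤ v0 := by
    intro j
    induction j with
    | zero => exact ⟨hmuX, hmuv0⟩
    | succ j ih =>
      have hrw : M * (j + 1) = M + M * j := by ring
      rw [hrw, Function.iterate_add_apply]
      obtain ⟨h1, h2⟩ := ih
      obtain ⟨h3, h4, h5⟩ := hgiter M _ _ h1 hv0X h2
      exact ⟨h3, le_trans h5 hxM⟩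
  have hOrbit : ∀ m, g^[m] mu ∈ zeroBox d xstar ∧ ∀ i, g^[m] mu i ≤ mu i + δ := by
    intro m
    have hmod : m = m % M + M * (m / M) := by
      have := Nat.div_add_mod m M; omega
    have hr : m % M ≤ M := (Nat.mod_lt m (by omega)).le
    obtain ⟨h1, h2⟩ := hblock (m / M)
    obtain ⟨h3, h4, h5⟩ := hgiter (m % M) _ _ h1 hv0X h2
    rw [hmod, Function.iterate_add_apply]
    refine ⟨h3, fun i => ?_⟩
    have h6 := h5 i
    have h7 := (hIter (m % M) hr).2.2 i
    have h8 : (↑(m % M) : ℝ) * η ≤ M * η := by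
      have : ((m % M : ℕ) : ℝ) ≤ (M : ℝ) := by exact_mod_cast hr
      nlinarith
    have h9 : (M:ℝ) * η = ε / 2 := by rw [hηdef]; field_simp
    have h10 := (hfit (m % M)).2 i
    have h11 := hv0le i
    have : ε + ε = δ := by rw [hε]; ring
    linarith
  -- the orbit is monotone
  have hOM : Monotone fun m => g^[m] mu := by
    refine monotone_nat_of_le_succ fun m => ?_
    rw [Function.iterate_succ_apply]
    have hmug : mu ≤ g mu := by
      intro i
      have := f_le_gS xstar fn f hconv n hmuX i
      rw [hfix] at this; exact this
    exact (hgiter m mu (g mu) hmuX (gS_mem xstar fn f hfnmaps hconv n hmuX) hmug).2.2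
  -- the limit point q
  have hbdd : ∀ i, BddAbove (Set.range fun m => g^[m] mu i) := by
    intro i
    exact ⟨mu i + δ, by rintro _ ⟨m, rfl⟩; exact (hOrbit m).2 i⟩
  set q : Fin d → ℝ := fun i => ⨆ m, g^[m] mu i with hqdef
  have hmq : ∀ m i, g^[m] mu i ≤ q i := fun m i => le_ciSup (hbdd i) m
  have hq_ub : ∀ i, q i ≤ mu i + δ := fun i => ciSup_le fun m => (hOrbit m).2 i
  have hmuq : ∀ i, mu i ≤ q i := fun i => hmq 0 i
  have hqX : q ∈ zeroBox d xstar := by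
    intro i
    refine ⟨le_trans (hmuX i).1 (hmuq i), ?_⟩
    rcases eq_or_ne (xstar i) ⊤ with h | h
    · simp [h]
    · rw [ENNReal.ofReal_le_iff_le_toReal h]
      exact ciSup_le fun m => (ENNReal.ofReal_le_iff_le_toReal h).mp ((hOrbit m).1 i).2
  -- q is a prefixpoint of g
  have hgq : ∀ i, g q i ≤ q i := by
    intro i
    refine le_of_forall_pos_le_add fun θ hθ => ?_
    have hex : ∀ j, ∃ m, q j - θ < g^[m] mu j := by
      intro j
      exact exists_lt_of_lt_ciSup (by linarith [hmuq j, sub_lt_self (q j) hθ])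
    choose ms hms using hex
    set m0 := Finset.univ.sup ms with hm0
    have hms' : ∀ j, q j - θ < g^[m0] mu j := fun j =>
      lt_of_lt_of_le (hms j) (hOM (Finset.le_sup (Finset.mem_univ j)) j)
    have hnorm : ‖q - g^[m0] mu‖ ≤ θ :=
      norm_le_of_coord hθ.le (fun j => hmq m0 j) (fun j => by linarith [hms' j])
    have h1 : g q i ≤ g (g^[m0] mu) i + θ :=
      gS_le_add xstar fn f hfnne hconv n hqX (hOrbit m0).1 θ hnorm i
    have h2 : g (g^[m0] mu) i ≤ q i := by
      have := hmq (m0 + 1) i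
      rwa [Function.iterate_succ_apply'] at this
    linarith
  -- conclude
  have hlfp : lfpF d (fun x i => ⨆ k : {k : ℕ // n ≤ k}, extendF d xstar (fn k.1) x i)
      ≤ fun i => ENNReal.ofReal (q i) := by
    apply sInf_le
    intro i
    refine iSup_le fun k => iSup_le fun y => ?_
    have hyq : y.1 ≤ q := fun j =>
      (ENNReal.ofReal_le_ofReal_iff (hqX j).1).mp (y.2.2 j)
    have h1 : fn k.1 y.1 i ≤ fn k.1 q i := hfnmono k.1 y.1 y.2.1 q hqX hyq i
    have h2 : fn k.1 q i ≤ g q i := le_gS xstar fn f hconv n k.1 k.2 hqX i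
    exact ENNReal.ofReal_le_ofReal (by linarith [hgq i])
  intro i
  exact le_trans (hlfp i) (ENNReal.ofReal_le_ofReal (hq_ub i))


/-- If `(f_n)` are monotone non-expansive maps on a 0-box `X` converging
pointwise to a Picard operator `f`, then `μ(sup_{k ≥ n} f_k) → μf`. -/
theorem lfp_sup_tail_tendsto_lfp (d : ℕ) (xstar : Fin d → ENNReal)
    (fn : ℕ → (Fin d → ℝ) → Fin d → ℝ)
    (hfnmaps : ∀ n, ∀ x ∈ zeroBox d xstar, fn n x ∈ zeroBox d xstar)
    (hfnmono : ∀ n, ∀ x ∈ zeroBox d xstar, ∀ y ∈ zeroBox d xstar, x ≤ y → fn n x ≤ fn n y)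
    (hfnne : ∀ n, ∀ x ∈ zeroBox d xstar, ∀ y ∈ zeroBox d xstar, ‖fn n x - fn n y‖ ≤ ‖x - y‖)
    (f : (Fin d → ℝ) → Fin d → ℝ)
    (hmaps : ∀ x ∈ zeroBox d xstar, f x ∈ zeroBox d xstar)
    (hmono : ∀ x ∈ zeroBox d xstar, ∀ y ∈ zeroBox d xstar, x ≤ y → f x ≤ f y)
    (hne : ∀ x ∈ zeroBox d xstar, ∀ y ∈ zeroBox d xstar, ‖f x - f y‖ ≤ ‖x - y‖)
    (hconv : ∀ x ∈ zeroBox d xstar, Tendsto (fun n => fn n x) atTop (nhds (f x)))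
    (mu : Fin d → ℝ) (hmuX : mu ∈ zeroBox d xstar) (hfix : f mu = mu)
    (huniq : ∀ y ∈ zeroBox d xstar, f y = y → y = mu)
    (hpicard : ∀ x ∈ zeroBox d xstar, Tendsto (fun n => f^[n] x) atTop (nhds mu)) :
    Tendsto
      (fun n => lfpF d (fun x i => ⨆ k : {k : ℕ // n ≤ k}, extendF d xstar (fn k.1) x i))
      atTop (nhds (lfpF d (extendF d xstar f))) := by
  have hpicard0 := hpicard _ (zero_mem_zeroBox d xstar)
  rw [lfp_extendF_eq d xstar f hmaps hmono mu hmuX hfix hpicard0]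
  rw [tendsto_pi_nhds]
  intro i
  have hlow : ∀ n, ENNReal.ofReal (mu i) ≤
      lfpF d (fun x i => ⨆ k : {k : ℕ // n ≤ k}, extendF d xstar (fn k.1) x i) i := by
    intro n
    have : (fun j => ENNReal.ofReal (mu j)) ≤
        lfpF d (fun x i => ⨆ k : {k : ℕ // n ≤ k}, extendF d xstar (fn k.1) x i) :=
      le_sInf fun x hx => by
        intro j
        exact ofReal_mu_le_of_prefixpoint d xstar f hmaps mu hpicard0 x
          (le_trans (extendF_le_tailSup d xstar fn f hconv n x) hx) j
    exact this i
  rw [tendsto_order]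
  constructor
  · intro a ha
    exact Eventually.of_forall fun n => lt_of_lt_of_le ha (hlow n)
  · intro a ha
    rcases eq_or_ne a ⊤ with rfl | haT
    · filter_upwards [lfp_tailSup_upper d xstar fn hfnmaps hfnmono hfnne f hmaps hmono hne
        hconv mu hmuX hfix hpicard 1 one_pos] with n h
      exact lt_of_le_of_lt (h i) ENNReal.ofReal_lt_top
    · set b := ENNReal.ofReal (mu i) with hb
      have hbT : b ≠ ⊤ := ENNReal.ofReal_ne_top
      have hab : b < a := ha
      have hsub0 : a - b ≠ 0 := by
        rw [← pos_iff_ne_zero]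
        exact tsub_pos_of_lt hab
      have hsubT : a - b ≠ ⊤ := by
        intro h
        exact haT (eq_top_iff.2 (h ▸ tsub_le_self.trans_eq rfl : (⊤:ENNReal) ≤ a))
      set c := (a - b) / 2 with hc
      have hc0 : c ≠ 0 := by
        simp only [hc, ne_eq, ENNReal.div_eq_zero_iff]
        push_neg
        exact ⟨hsub0, ENNReal.ofNat_ne_top⟩
      have hcT : c ≠ ⊤ := by
        simp only [hc, ne_eq, ENNReal.div_eq_top]
        push_neg
        exact ⟨fun _ => two_ne_zero, fun h => absurd h hsubT⟩
      set δ := c.toReal with hδdef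
      have hδ : 0 < δ := ENNReal.toReal_pos hc0 hcT
      have hkey : ENNReal.ofReal (mu i + δ) < a := by
        rw [ENNReal.ofReal_add (hmuX i).1 hδ.le]
        have h1 : ENNReal.ofReal δ ≤ c := ENNReal.ofReal_toReal_le
        have h2 : b + c < a := by
          have h3 : c < a - b := ENNReal.half_lt_self hsub0 hsubT
          calc b + c < b + (a - b) := ENNReal.add_lt_add_left hbT h3
            _ = a := add_tsub_cancel_of_le hab.le
        exact lt_of_le_of_lt (add_le_add_right h1 b) h2
      filter_upwards [lfp_tailSup_upper d xstar fn hfnmaps hfnmono hfnne f hmaps hmono hne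
        hconv mu hmuX hfix hpicard δ hδ] with n h
      exact lt_of_le_of_lt (h i) hkey
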